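/- Let (X, μ) be a measure space with μ(X) < ∞, let f, f* : X → ℝ be measurable functions with values in [0, 1], and let H be a nonempty set of measurable functions X → ℝ with values in [0, 1]. Let A ⊆ B be measurable subsets of X, and for a measurable set S define ε_S(h) = ∫_S |h(x) − f(x)| dμ(x). Suppose there exists h₀ ∈ H with ε_A(h₀) = ⨅_{h ∈ H} ε_A(h) and ε_{B \ A}(h₀) = ⨅_{h ∈ H} ε_{B \ A}(h). Let M_A = {h ∈ H : ε_A(h) = ⨅_{h' ∈ H} ε_A(h')} and M_B = {h ∈ H : ε_B(h) = ⨅_{h' ∈ H} ε_B(h')}. Then ⨆_{h ∈ M_B} ∫ |h(x) − f*(x)| dμ(x) ≤ ⨆_{h ∈ M_A} ∫ |h(x) − f*(x)| dμ(x). -/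

import Mathlib

open MeasureTheory

/-- Integral form of the paper's Theorem 2: if some `h₀ ∈ H` simultaneously
minimizes the disagreement error on `A` and on `B \ A` (with `A ⊆ B`), then the
worst-case disagreement `sup ∫ |h − f*| dμ` over hypotheses optimal on `B` is
at most the corresponding worst case over hypotheses optimal on `A`. -/
theorem stmt_8 {X : Type*} [MeasurableSpace X] (μ : Measure X) [IsFiniteMeasure μ]
    (f fstar : X → ℝ) (hf : Measurable f) (hf0 : ∀ x, 0 ≤ f x) (hf1 : ∀ x, f x ≤ 1)
    (hfs : Measurable fstar) (hfs0 : ∀ x, 0 ≤ fstar x) (hfs1 : ∀ x, fstar x ≤ 1)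
    (H : Set (X → ℝ)) [Nonempty ↥H]
    (hH : ∀ h ∈ H, Measurable h ∧ (∀ x, 0 ≤ h x) ∧ (∀ x, h x ≤ 1))
    (A B : Set X) (hAm : MeasurableSet A) (hBm : MeasurableSet B) (hAB : A ⊆ B)
    (h₀ : X → ℝ) (h₀H : h₀ ∈ H)
    (h₀A : ∫ x in A, |h₀ x - f x| ∂μ =
      ⨅ h : H, ∫ x in A, |(h : X → ℝ) x - f x| ∂μ)
    (h₀BA : ∫ x in B \ A, |h₀ x - f x| ∂μ =
      ⨅ h : H, ∫ x in B \ A, |(h : X → ℝ) x - f x| ∂μ) :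
    sSup ((fun h : X → ℝ => ∫ x, |h x - fstar x| ∂μ) ''
        {h | h ∈ H ∧
          ∫ x in B, |h x - f x| ∂μ = ⨅ h' : H, ∫ x in B, |(h' : X → ℝ) x - f x| ∂μ}) ≤
      sSup ((fun h : X → ℝ => ∫ x, |h x - fstar x| ∂μ) ''
        {h | h ∈ H ∧
          ∫ x in A, |h x - f x| ∂μ = ⨅ h' : H, ∫ x in A, |(h' : X → ℝ) x - f x| ∂μ}) := by
  -- integrability of |h - f| for h ∈ H
  have hint : ∀ h ∈ H, Integrable (fun x => |h x - f x|) μ := by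
    intro h hh
    refine (integrable_const (2 : ℝ)).mono'
      (((hH h hh).1.sub hf).abs.aestronglyMeasurable) (ae_of_all _ fun x => ?_)
    have h0 := (hH h hh).2.1 x
    have h1 := (hH h hh).2.2 x
    rw [Real.norm_eq_abs, abs_abs, abs_sub_le_iff]
    constructor <;> nlinarith [hf0 x, hf1 x]
  -- error functionals are nonneg
  have herrnn : ∀ (S : Set X) (h : X → ℝ), 0 ≤ ∫ x in S, |h x - f x| ∂μ := fun S h =>
    integral_nonneg fun x => abs_nonneg _
  have hbdd : ∀ S : Set X, BddBelow (Set.range fun h : H => ∫ x in S, |(h : X → ℝ) x - f x| ∂μ) :=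
    fun S => ⟨0, by rintro _ ⟨h, rfl⟩; exact herrnn S h⟩
  -- split of integral over B
  have hsplit : ∀ h ∈ H, ∫ x in B, |h x - f x| ∂μ =
      (∫ x in A, |h x - f x| ∂μ) + ∫ x in B \ A, |h x - f x| ∂μ := by
    intro h hh
    conv_lhs => rw [← Set.union_diff_cancel hAB]
    rw [setIntegral_union Set.disjoint_sdiff_right (hBm.diff hAm)
        ((hint h hh).integrableOn) ((hint h hh).integrableOn)]
  -- h₀ minimizes on B
  have h₀Bmin : ∀ h ∈ H, ∫ x in B, |h₀ x - f x| ∂μ ≤ ∫ x in B, |h x - f x| ∂μ := by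
    intro h hh
    rw [hsplit h₀ h₀H, hsplit h hh, h₀A, h₀BA]
    exact add_le_add (ciInf_le (hbdd A) ⟨h, hh⟩) (ciInf_le (hbdd (B \ A)) ⟨h, hh⟩)
  have h₀B : ∫ x in B, |h₀ x - f x| ∂μ = ⨅ h : H, ∫ x in B, |(h : X → ℝ) x - f x| ∂μ :=
    le_antisymm (le_ciInf fun h => h₀Bmin h h.2) (ciInf_le (hbdd B) ⟨h₀, h₀H⟩)
  -- M_B ⊆ M_A
  have hsub : {h | h ∈ H ∧
        ∫ x in B, |h x - f x| ∂μ = ⨅ h' : H, ∫ x in B, |(h' : X → ℝ) x - f x| ∂μ} ⊆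
      {h | h ∈ H ∧
        ∫ x in A, |h x - f x| ∂μ = ⨅ h' : H, ∫ x in A, |(h' : X → ℝ) x - f x| ∂μ} := by
    rintro h ⟨hh, hB⟩
    refine ⟨hh, le_antisymm ?_ (ciInf_le (hbdd A) ⟨h, hh⟩)⟩
    have h1 : ∫ x in B, |h x - f x| ∂μ ≤ ∫ x in B, |h₀ x - f x| ∂μ := by
      rw [hB, ← h₀B]
    have h2 := ciInf_le (hbdd (B \ A)) (⟨h, hh⟩ : H)
    rw [hsplit h hh, hsplit h₀ h₀H, h₀A, h₀BA] at h1
    simp only at h2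
    rw [← h₀BA] at h2 h1
    linarith
  -- bounded above
  have hub : BddAbove ((fun h : X → ℝ => ∫ x, |h x - fstar x| ∂μ) ''
      {h | h ∈ H ∧
        ∫ x in A, |h x - f x| ∂μ = ⨅ h' : H, ∫ x in A, |(h' : X → ℝ) x - f x| ∂μ}) := by
    refine ⟨(μ Set.univ).toReal, ?_⟩
    rintro _ ⟨h, ⟨hh, -⟩, rfl⟩
    calc ∫ x, |h x - fstar x| ∂μ ≤ ‖∫ x, |h x - fstar x| ∂μ‖ := by rw [Real.norm_eq_abs]; exact le_abs_self _
      _ ≤ 1 * (μ Set.univ).toReal := by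
          refine norm_integral_le_of_norm_le_const (ae_of_all _ fun x => ?_)
          have h0 := (hH h hh).2.1 x
          have h1 := (hH h hh).2.2 x
          rw [Real.norm_eq_abs, abs_abs, abs_sub_le_iff]
          constructor <;> nlinarith [hfs0 x, hfs1 x]
      _ = (μ Set.univ).toReal := one_mul _
  -- nonempty: h₀ is in M_B
  refine csSup_le_csSup hub ⟨_, ⟨h₀, ⟨h₀H, h₀B⟩, rfl⟩⟩ (Set.image_mono hsub)
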